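/- Let P : X → G be an isofibration of groupoids, let F, F' : H → G be functors and α : F ≅ F' a natural isomorphism. Then the pullback groupoids F*X and F'*X (strict pullbacks of P along F and F') are equivalent as categories over H. -/

import Mathlib

open CategoryTheory

universe u v

/-- An isofibration of groupoids. -/
def IsIsofibration {E : Type*} {B : Type*} [Category E] [Category B]
    (P : E ⥤ B) : Prop :=
  ∀ (e : E) (b : B) (g : P.obj e ⟶ b),
    ∃ (e' : E) (f : e ⟶ e') (h : P.obj e' = b), P.map f ≫ eqToHom h = g

variable {H X G : Type u} [Groupoid.{v} H] [Groupoid.{v} X] [Groupoid.{v} G]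

/-- The strict pullback of `P : X ⥤ G` along `F : H ⥤ G`. -/
structure StrictPB (F : H ⥤ G) (P : X ⥤ G) : Type u where
  h : H
  x : X
  eq : F.obj h = P.obj x

instance (F : H ⥤ G) (P : X ⥤ G) : Category (StrictPB F P) where
  Hom a b := {f : (a.h ⟶ b.h) × (a.x ⟶ b.x) //
    F.map f.1 ≫ eqToHom b.eq = eqToHom a.eq ≫ P.map f.2}
  id a := ⟨(𝟙 _, 𝟙 _), by simp⟩
  comp f g := ⟨(f.1.1 ≫ g.1.1, f.1.2 ≫ g.1.2), by
    simp only [Functor.map_comp, Category.assoc, g.2, reassoc_of% f.2]⟩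
  id_comp f := Subtype.ext (Prod.ext (by simp) (by simp))
  comp_id f := Subtype.ext (Prod.ext (by simp) (by simp))
  assoc f g h := Subtype.ext (Prod.ext (by simp) (by simp))

/-- The projection from the strict pullback to `H`. -/
def StrictPB.proj (F : H ⥤ G) (P : X ⥤ G) : StrictPB F P ⥤ H where
  obj a := a.h
  map f := f.1.1
  map_id _ := rfl
  map_comp _ _ := rfl

namespace Stmt8Aux

variable (P : X ⥤ G) (hP : IsIsofibration P) (F F' : H ⥤ G) (α : F ≅ F')

@[simp] lemma hom_comp_fst {a b c : StrictPB F P} (f : a ⟶ b) (g : b ⟶ c) :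
    (f ≫ g).1.1 = f.1.1 ≫ g.1.1 := rfl

@[simp] lemma hom_comp_snd {a b c : StrictPB F P} (f : a ⟶ b) (g : b ⟶ c) :
    (f ≫ g).1.2 = f.1.2 ≫ g.1.2 := rfl

@[simp] lemma hom_id_fst (a : StrictPB F P) : (𝟙 a : a ⟶ a).1.1 = 𝟙 a.h := rfl
@[simp] lemma hom_id_snd (a : StrictPB F P) : (𝟙 a : a ⟶ a).1.2 = 𝟙 a.x := rfl

instance : Groupoid (StrictPB F P) where
  inv {a b} f := ⟨(Groupoid.inv f.1.1, Groupoid.inv f.1.2), by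
    have h := f.2
    show F.map (Groupoid.inv f.1.1) ≫ _ = _ ≫ P.map (Groupoid.inv f.1.2)
    simp only [Groupoid.inv_eq_inv, Functor.map_inv]
    rw [IsIso.inv_comp_eq, reassoc_of% h]
    simp⟩
  inv_comp f := Subtype.ext (Prod.ext (by simp) (by simp))
  comp_inv f := Subtype.ext (Prod.ext (by simp) (by simp))

noncomputable def liftObj {x : X} {b : G} (g : P.obj x ⟶ b) : X := (hP x b g).choose

noncomputable def liftMap {x : X} {b : G} (g : P.obj x ⟶ b) : x ⟶ liftObj P hP g :=
  (hP x b g).choose_spec.choose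

lemma liftEq {x : X} {b : G} (g : P.obj x ⟶ b) : P.obj (liftObj P hP g) = b :=
  (hP x b g).choose_spec.choose_spec.choose

lemma lift_spec {x : X} {b : G} (g : P.obj x ⟶ b) :
    P.map (liftMap P hP g) ≫ eqToHom (liftEq P hP g) = g :=
  (hP x b g).choose_spec.choose_spec.choose_spec

/-- the canonical map used for each object of the pullback -/
noncomputable def gmap (a : StrictPB F P) : P.obj a.x ⟶ F'.obj a.h :=
  eqToHom a.eq.symm ≫ α.hom.app a.h

lemma Pmap_lift (a : StrictPB F P) :
    P.map (liftMap P hP (gmap P F F' α a)) =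
      eqToHom a.eq.symm ≫ α.hom.app a.h ≫ eqToHom (liftEq P hP (gmap P F F' α a)).symm := by
  have := lift_spec P hP (gmap P F F' α a)
  rw [← IsIso.eq_comp_inv] at this
  rw [this]
  simp [gmap, inv_eqToHom]
  congr 2
  exact IsIso.inv_eq_of_hom_inv_id ((eqToHom_trans _ _).trans (eqToHom_refl _ _))

noncomputable def E : StrictPB F P ⥤ StrictPB F' P where
  obj a := ⟨a.h, liftObj P hP (gmap P F F' α a), (liftEq P hP (gmap P F F' α a)).symm⟩
  map {a b} φ := ⟨(φ.1.1,
      Groupoid.inv (liftMap P hP (gmap P F F' α a)) ≫ φ.1.2 ≫ liftMap P hP (gmap P F F' α b)), by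
    have hφ := φ.2
    have hnat := α.hom.naturality φ.1.1
    simp only [Groupoid.inv_eq_inv, Functor.map_comp, P.map_inv,
      Pmap_lift P hP F F' α a, Pmap_lift P hP F F' α b]
    simp only [IsIso.inv_comp, IsIso.Iso.inv_hom, eqToHom_trans]
    rw [inv_eqToHom, inv_eqToHom]
    simp only [Category.assoc, eqToHom_trans_assoc, eqToHom_refl, Category.id_comp]
    rw [← reassoc_of% hφ]
    simp only [Category.assoc, eqToHom_trans_assoc, eqToHom_refl, Category.id_comp]
    rw [reassoc_of% hnat]
    simp⟩
  map_id a := Subtype.ext (Prod.ext rfl (by simp))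
  map_comp φ ψ := Subtype.ext (Prod.ext rfl (by simp))

lemma Pmap_lift' {x : X} {b : G} (g : P.obj x ⟶ b) :
    P.map (liftMap P hP g) = g ≫ eqToHom (liftEq P hP g).symm := by
  have := lift_spec P hP g
  rw [← IsIso.eq_comp_inv] at this
  rw [this, inv_eqToHom]

lemma E_faithful : (E P hP F F' α).Faithful := by
  constructor
  intro a b φ ψ h
  apply Subtype.ext; apply Prod.ext
  · exact congrArg (fun t => t.1.1) h
  · have h2 : (Groupoid.inv (liftMap P hP (gmap P F F' α a)) ≫ φ.1.2 ≫
        liftMap P hP (gmap P F F' α b)) = (Groupoid.inv (liftMap P hP (gmap P F F' α a)) ≫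
        ψ.1.2 ≫ liftMap P hP (gmap P F F' α b)) := congrArg (fun t => t.1.2) h
    rwa [Groupoid.inv_eq_inv, cancel_epi, cancel_mono] at h2

lemma E_full : (E P hP F F' α).Full := by
  constructor
  intro a b ψ
  dsimp only [E] at ψ
  have hψ := ψ.2
  have hnat := α.hom.naturality (show a.h ⟶ b.h from ψ.1.1)
  refine ⟨⟨(ψ.1.1, liftMap P hP (gmap P F F' α a) ≫ ψ.1.2 ≫
      Groupoid.inv (liftMap P hP (gmap P F F' α b))), ?_⟩, ?_⟩
  · simp only [Groupoid.inv_eq_inv, Functor.map_comp, Functor.map_inv,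
      Pmap_lift' P hP, gmap]
    simp only [IsIso.inv_comp, inv_eqToHom, Category.assoc, IsIso.Iso.inv_hom]
    erw [← reassoc_of% hψ]
    simp only [Category.assoc, eqToHom_trans_assoc, eqToHom_refl, Category.id_comp]
    rw [← reassoc_of% hnat]
    simp
    erw [eqToHom_trans_assoc]
    simp
  · apply Subtype.ext; apply Prod.ext
    · rfl
    · show Groupoid.inv (liftMap P hP (gmap P F F' α a)) ≫ (liftMap P hP (gmap P F F' α a) ≫ ψ.1.2 ≫ Groupoid.inv (liftMap P hP (gmap P F F' α b))) ≫ liftMap P hP (gmap P F F' α b) = ψ.1.2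
      simp

lemma E_essSurj : (E P hP F F' α).EssSurj := by
  constructor
  intro b
  set g0 : P.obj b.x ⟶ F.obj b.h := eqToHom b.eq.symm ≫ α.inv.app b.h with hg0
  set a : StrictPB F P := ⟨b.h, liftObj P hP g0, (liftEq P hP g0).symm⟩ with ha
  have cond : F'.map (𝟙 b.h) ≫ eqToHom b.eq =
      eqToHom (liftEq P hP (gmap P F F' α a)).symm ≫
        P.map (Groupoid.inv (liftMap P hP (gmap P F F' α a)) ≫ Groupoid.inv (liftMap P hP g0)) := by
    simp only [Groupoid.inv_eq_inv, Functor.map_comp, Functor.map_inv, Functor.map_id,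
      Pmap_lift' P hP, gmap, hg0]
    simp only [IsIso.inv_comp, inv_eqToHom, Category.assoc, IsIso.Iso.inv_hom,
      eqToHom_trans_assoc, eqToHom_refl, Category.id_comp, Category.comp_id]
    rw [show inv (α.inv.app b.h) = α.hom.app b.h by simp]
    simp
    exact (eqToHom_trans _ _).symm
  exact ⟨a, ⟨asIso (⟨(𝟙 b.h, Groupoid.inv (liftMap P hP (gmap P F F' α a)) ≫
    Groupoid.inv (liftMap P hP g0)), cond⟩ : (E P hP F F' α).obj a ⟶ b)⟩⟩

end Stmt8Aux

/-- if `P : X ⥤ G` is an isofibration and `α : F ≅ F'`, then the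
strict pullbacks of `P` along `F` and along `F'` are equivalent over `H`. -/
theorem stmt8 (P : X ⥤ G) (hP : IsIsofibration P) (F F' : H ⥤ G) (α : F ≅ F') :
    ∃ E : StrictPB F P ⥤ StrictPB F' P,
      E.IsEquivalence ∧ E ⋙ StrictPB.proj F' P = StrictPB.proj F P := by
  refine ⟨Stmt8Aux.E P hP F F' α,
    ⟨Stmt8Aux.E_faithful P hP F F' α, Stmt8Aux.E_full P hP F F' α,
      Stmt8Aux.E_essSurj P hP F F' α⟩, rfl⟩
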